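/- For every integer d ≥ 5, the quotient Stab_{Γ_d}(1)/Stab_{Γ_d}(2) of the first by the second level stabilizer of the Fabrykowski–Gupta group Γ_d is isomorphic to the direct product of d copies of the cyclic group ℤ_d, with the images of g_0 = r, g_1 = r^a, …, g_{d−1} = r^{a^{d−1}} forming an independent generating set. -/

import Mathlib

namespace FG

variable (d : ℕ) [NeZero d]

/-- The rooted-tree automorphism `a` of the `d`-regular rooted tree (vertex set: the free
monoid `{0,…,d-1}^*`), acting by `(x w)^a = ((x+1) mod d) w`. -/
def aFun : List (Fin d) → List (Fin d)
  | [] => []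
  | x :: w => (x + 1) :: w

def aInv : List (Fin d) → List (Fin d)
  | [] => []
  | x :: w => (x - 1) :: w

lemma aInv_aFun : ∀ w, aInv d (aFun d w) = w := by
  intro w; cases w <;> simp [aFun, aInv]

lemma aFun_aInv : ∀ w, aFun d (aInv d w) = w := by
  intro w; cases w <;> simp [aFun, aInv]

def aPerm : Equiv.Perm (List (Fin d)) :=
  ⟨aFun d, aInv d, aInv_aFun d, aFun_aInv d⟩

/-- The rooted-tree automorphism `r`:
`(0 w)^r = 0 w^a`, `(x w)^r = x w` for `1 ≤ x ≤ d-2`, `((d-1) w)^r = (d-1) w^r`. -/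
def rFun : List (Fin d) → List (Fin d)
  | [] => []
  | x :: w => if x = 0 then x :: aFun d w else if x = -1 then x :: rFun w else x :: w

def rInv : List (Fin d) → List (Fin d)
  | [] => []
  | x :: w => if x = 0 then x :: aInv d w else if x = -1 then x :: rInv w else x :: w

lemma rInv_rFun : ∀ w, rInv d (rFun d w) = w := by
  intro w
  induction w with
  | nil => simp [rFun, rInv]
  | cons x w ih =>
    by_cases h0 : x = 0
    · simp [rFun, rInv, h0, aInv_aFun]
    · by_cases h1 : x = -1
      · subst h1
        have hd : ¬ d = 1 := by simpa using h0
        simp [rFun, rInv, hd, ih]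
      · simp [rFun, rInv, h0, h1]

lemma rFun_rInv : ∀ w, rFun d (rInv d w) = w := by
  intro w
  induction w with
  | nil => simp [rFun, rInv]
  | cons x w ih =>
    by_cases h0 : x = 0
    · simp [rFun, rInv, h0, aFun_aInv]
    · by_cases h1 : x = -1
      · subst h1
        have hd : ¬ d = 1 := by simpa using h0
        simp [rFun, rInv, hd, ih]
      · simp [rFun, rInv, h0, h1]

def rPerm : Equiv.Perm (List (Fin d)) :=
  ⟨rFun d, rInv d, rInv_rFun d, rFun_rInv d⟩

/-- The Fabrykowski–Gupta group `Γ_d`, as the subgroup of the permutation group of the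
free monoid `{0,…,d-1}^*` generated by the tree automorphisms `a` and `r`. -/
def Gamma : Subgroup (Equiv.Perm (List (Fin d))) :=
  Subgroup.closure {aPerm d, rPerm d}

/-- The generator `a` as an element of `Γ_d`. -/
def aG : ↥(Gamma d) :=
  ⟨aPerm d, Subgroup.subset_closure (Set.mem_insert _ _)⟩

/-- The generator `r` as an element of `Γ_d`. -/
def rG : ↥(Gamma d) :=
  ⟨rPerm d, Subgroup.subset_closure (Set.mem_insert_iff.mpr (Or.inr rfl))⟩

/-- The `n`-th level stabilizer `Stab_{Γ_d}(n)`: all elements of `Γ_d` fixing every word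
of length `n`. -/
def Stab (n : ℕ) : Subgroup ↥(Gamma d) where
  carrier := { g | ∀ w : List (Fin d), w.length = n → (g : Equiv.Perm (List (Fin d))) w = w }
  one_mem' := by intro w _; rfl
  mul_mem' := by
    intro g h hg hh w hw
    have : ((g * h : ↥(Gamma d)) : Equiv.Perm (List (Fin d))) w
        = (g : Equiv.Perm (List (Fin d))) ((h : Equiv.Perm (List (Fin d))) w) := rfl
    rw [this, hh w hw, hg w hw]
  inv_mem' := by
    intro g hg w hw
    have h1 := hg w hw
    calc ((g⁻¹ : ↥(Gamma d)) : Equiv.Perm (List (Fin d))) w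
        = (g : Equiv.Perm (List (Fin d)))⁻¹ ((g : Equiv.Perm (List (Fin d))) w) := by
          rw [h1]; rfl
      _ = w := by simp

/-- The conjugate `g_i = r^{a^i} = a^{-i} r a^i` in `Γ_d`. -/
def gG (i : ℕ) : ↥(Gamma d) := (aG d ^ i)⁻¹ * rG d * aG d ^ i

end FG

namespace FG

variable (d : ℕ) [NeZero d]

open Fin.NatCast

lemma aPerm_apply (w : List (Fin d)) : aPerm d w = aFun d w := rfl

lemma rPerm_apply (w : List (Fin d)) : rPerm d w = rFun d w := rfl

-- auxiliary development

lemma aFun_length (w : List (Fin d)) : (aFun d w).length = w.length := by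
  cases w <;> simp [aFun]

lemma rFun_length (w : List (Fin d)) : (rFun d w).length = w.length := by
  induction w with
  | nil => simp [rFun]
  | cons x w ih => rw [rFun]; split_ifs <;> simp [aFun_length, ih]

lemma rFun_cons (y : Fin d) (w : List (Fin d)) :
    ∃ t, t.length = w.length ∧ rFun d (y :: w) = y :: t := by
  rw [rFun]; split_ifs
  exacts [⟨aFun d w, aFun_length d w, rfl⟩, ⟨rFun d w, rFun_length d w, rfl⟩, ⟨w, rfl, rfl⟩]

def Good (g : Equiv.Perm (List (Fin d))) : Prop :=
  ∃ β : Fin d, ∃ c : Fin d → Fin d,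
    g [] = [] ∧ (∀ x : Fin d, g [x] = [x + β]) ∧
    ∀ x y : Fin d, ∀ w : List (Fin d), ∃ w', w'.length = w.length ∧
      g (x :: y :: w) = (x + β) :: (y + c x) :: w'

lemma good_length {g : Equiv.Perm (List (Fin d))} (hg : Good d g) :
    ∀ w, (g w).length = w.length := by
  obtain ⟨β, c, h0, h1, h2⟩ := hg
  intro w
  match w with
  | [] => rw [h0]
  | [x] => rw [h1]; rfl
  | x :: y :: w => obtain ⟨w', hw', e⟩ := h2 x y w; rw [e]; simp [hw']

lemma good_one : Good d 1 :=
  ⟨0, fun _ => 0, rfl, by simp, fun x y w => ⟨w, rfl, by simp⟩⟩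

lemma good_mul {g h : Equiv.Perm (List (Fin d))} (hg : Good d g) (hh : Good d h) :
    Good d (g * h) := by
  obtain ⟨β, c, g0, g1, g2⟩ := hg
  obtain ⟨β', c', h0, h1, h2⟩ := hh
  refine ⟨β' + β, fun x => c' x + c (x + β'), ?_, ?_, ?_⟩
  · show g (h []) = []; rw [h0, g0]
  · intro x; show g (h [x]) = _; rw [h1, g1, add_assoc]
  · intro x y w
    obtain ⟨w1, hw1, e1⟩ := h2 x y w
    obtain ⟨w2, hw2, e2⟩ := g2 (x + β') (y + c' x) w1
    refine ⟨w2, hw1 ▸ hw2, ?_⟩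
    show g (h _) = _
    rw [e1, e2, add_assoc, add_assoc]

lemma good_inv {g : Equiv.Perm (List (Fin d))} (hg : Good d g) : Good d g⁻¹ := by
  have hlen := good_length d hg
  obtain ⟨β, c, g0, g1, g2⟩ := hg
  refine ⟨-β, fun x => -(c (x + -β)), ?_, ?_, ?_⟩
  · rw [Equiv.Perm.inv_def, Equiv.symm_apply_eq, g0]
  · intro x
    rw [Equiv.Perm.inv_def, Equiv.symm_apply_eq, g1]
    simp
  · intro x y w
    have hl : (g⁻¹ (x :: y :: w)).length = w.length + 2 := by
      have h := hlen (g⁻¹ (x :: y :: w))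
      rw [show g (g⁻¹ (x :: y :: w)) = x :: y :: w from g.apply_symm_apply _] at h
      rw [← h]; simp
    rcases e : g⁻¹ (x :: y :: w) with _ | ⟨u1, _ | ⟨u2, w''⟩⟩
    · rw [e] at hl; simp at hl
    · rw [e] at hl; simp at hl
    · have hw'' : w''.length = w.length := by rw [e] at hl; simpa using hl
      obtain ⟨w', hw', e2⟩ := g2 u1 u2 w''
      have happ : g (g⁻¹ (x :: y :: w)) = x :: y :: w := g.apply_symm_apply _
      rw [e, e2] at happ
      obtain ⟨hx, hy, hw⟩ : u1 + β = x ∧ u2 + c u1 = y ∧ w' = w := by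
        simpa using happ
      have hu1 : u1 = x + -β := by rw [← hx]; abel
      have hu2 : u2 = y + -(c (x + -β)) := by rw [← hy, ← hu1]; abel
      refine ⟨w'', hw'', ?_⟩
      simp only [hu1, hu2]

lemma good_a : Good d (aPerm d) :=
  ⟨1, fun _ => 0, rfl, fun x => rfl, fun x y w =>
    ⟨w, rfl, by rw [aPerm_apply, aFun]; simp⟩⟩

lemma rFun_one (x : Fin d) : rFun d [x] = [x] := by
  rw [rFun]; split_ifs <;> rfl

lemma good_r : Good d (rPerm d) := by
  refine ⟨0, fun x => if x = 0 then 1 else 0, rfl, ?_, ?_⟩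
  · intro x; rw [rPerm_apply, rFun_one]; simp
  · intro x y w
    by_cases h0 : x = 0
    · refine ⟨w, rfl, ?_⟩
      rw [rPerm_apply, rFun, if_pos h0, aFun]
      simp [h0]
    · by_cases h1 : x = -1
      · obtain ⟨t, ht, e⟩ := rFun_cons d y w
        refine ⟨t, ht, ?_⟩
        rw [rPerm_apply, rFun, if_neg h0, if_pos h1, e]
        simp [h0]
      · exact ⟨w, rfl, by rw [rPerm_apply, rFun, if_neg h0, if_neg h1]; simp [h0]⟩

lemma mem_stab_iff (n : ℕ) (g : ↥(Gamma d)) :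
    g ∈ Stab d n ↔ ∀ w : List (Fin d), w.length = n →
      (g : Equiv.Perm (List (Fin d))) w = w := Iff.rfl

lemma gamma_good : ∀ g ∈ Gamma d, Good d g := by
  intro g hg
  refine Subgroup.closure_induction ?_ ?_ ?_ ?_ hg
  · intro x hx
    simp only [Set.mem_insert_iff, Set.mem_singleton_iff] at hx
    rcases hx with rfl | rfl
    exacts [good_a d, good_r d]
  · exact good_one d
  · intro x y _ _ hx hy; exact good_mul d hx hy
  · intro x _ hx; exact good_inv d hx

lemma aPerm_pow (n : ℕ) (x : Fin d) (w : List (Fin d)) :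
    (aPerm d ^ n) (x :: w) = (x + (n : Fin d)) :: w := by
  induction n generalizing x with
  | zero => simp
  | succ n ih =>
    have h : aPerm d (x :: w) = (x + 1) :: w := rfl
    rw [pow_succ, Equiv.Perm.mul_apply, h, ih, Nat.cast_add, Nat.cast_one]
    congr 1
    abel

lemma rPerm_two (x y : Fin d) :
    rPerm d [x, y] = [x, y + if x = 0 then 1 else 0] := by
  rw [rPerm_apply]
  by_cases h0 : x = 0
  · rw [rFun, if_pos h0, aFun]; simp [h0]
  · by_cases h1 : x = -1
    · rw [rFun, if_neg h0, if_pos h1, rFun_one]; simp [h0]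
    · rw [rFun, if_neg h0, if_neg h1]; simp [h0]

lemma gG_coe (i : ℕ) :
    ((gG d i : ↥(Gamma d)) : Equiv.Perm (List (Fin d)))
      = (aPerm d ^ i)⁻¹ * rPerm d * aPerm d ^ i := by
  simp [gG, aG, rG]

lemma gG_one (i : ℕ) (x : Fin d) :
    ((gG d i : ↥(Gamma d)) : Equiv.Perm (List (Fin d))) [x] = [x] := by
  rw [gG_coe, Equiv.Perm.mul_apply, Equiv.Perm.mul_apply]
  have h : (aPerm d ^ i) [x] = [x + (i : Fin d)] := aPerm_pow d i x []
  have h2 : rPerm d [x + (i : Fin d)] = [x + (i : Fin d)] := by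
    rw [rPerm_apply, rFun_one]
  rw [h, h2, ← h]
  exact (aPerm d ^ i).symm_apply_apply _

lemma gG_two (i : ℕ) (x y : Fin d) :
    ((gG d i : ↥(Gamma d)) : Equiv.Perm (List (Fin d))) [x, y]
      = [x, y + if x + (i : Fin d) = 0 then 1 else 0] := by
  rw [gG_coe, Equiv.Perm.mul_apply, Equiv.Perm.mul_apply]
  rw [aPerm_pow d i x [y], rPerm_two]
  rw [Equiv.Perm.inv_def, Equiv.symm_apply_eq]
  rw [aPerm_pow d i x _]

lemma gG_mem (i : ℕ) : gG d i ∈ Stab d 1 := by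
  rw [mem_stab_iff]
  intro w hw
  match w with
  | [x] => exact gG_one d i x

def cOf (g : Equiv.Perm (List (Fin d))) (x : Fin d) : Fin d := (g [x, 0]).getD 1 0

lemma stab1_struct {g : Equiv.Perm (List (Fin d))} (hg : Good d g)
    (h1 : ∀ x : Fin d, g [x] = [x]) (x y : Fin d) :
    g [x, y] = [x, y + cOf d g x] := by
  obtain ⟨β, c, _, g1, g2⟩ := hg
  have hβ : β = 0 := by
    have h := g1 0
    rw [h1 0] at h
    have := List.head_eq_of_cons_eq h
    simpa using this.symm
  subst hβ
  have key : ∀ y' : Fin d, g [x, y'] = [x, y' + c x] := by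
    intro y'
    obtain ⟨w', hw', e⟩ := g2 x y' []
    have hnil : w' = [] := List.eq_nil_of_length_eq_zero (by simpa using hw')
    subst hnil
    rw [e]; simp
  have hc : cOf d g x = c x := by
    rw [cOf, key 0]; simp
  rw [key y, hc]

lemma stab1_fix {x : ↥(Stab d 1)} :
    ∀ z : Fin d, ((x : ↥(Gamma d)) : Equiv.Perm (List (Fin d))) [z] = [z] :=
  fun z => x.2 [z] rfl

lemma fin_cast_add (a b : Fin d) :
    (((a + b : Fin d) : Fin d).val : ZMod d) = (a.val : ZMod d) + (b.val : ZMod d) := by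
  rw [Fin.val_add, ZMod.natCast_mod, Nat.cast_add]

def phi : ↥(Stab d 1) →* (Fin d → Multiplicative (ZMod d)) where
  toFun x := fun j => Multiplicative.ofAdd
    (((cOf d ((x : ↥(Gamma d)) : Equiv.Perm (List (Fin d))) (-j)).val : ZMod d))
  map_one' := by
    funext j
    have h : cOf d (1 : Equiv.Perm (List (Fin d))) (-j) = 0 := by
      rw [cOf]; rfl
    simp only [OneMemClass.coe_one, h]
    simp
  map_mul' x y := by
    funext j
    set gx : Equiv.Perm (List (Fin d)) := ((x : ↥(Gamma d)) : Equiv.Perm (List (Fin d)))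
    set gy : Equiv.Perm (List (Fin d)) := ((y : ↥(Gamma d)) : Equiv.Perm (List (Fin d)))
    have hgx : Good d gx := gamma_good d _ (x : ↥(Gamma d)).2
    have hgy : Good d gy := gamma_good d _ (y : ↥(Gamma d)).2
    have e1 : gy [-j, 0] = [-j, cOf d gy (-j)] := by
      rw [stab1_struct d hgy (stab1_fix d) (-j) 0, zero_add]
    have e2 : gx [-j, cOf d gy (-j)] = [-j, cOf d gy (-j) + cOf d gx (-j)] :=
      stab1_struct d hgx (stab1_fix d) (-j) _
    have e3 : cOf d (((x * y : ↥(Stab d 1)) : ↥(Gamma d)) : Equiv.Perm (List (Fin d))) (-j)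
        = cOf d gy (-j) + cOf d gx (-j) := by
      have happ : (((x * y : ↥(Stab d 1)) : ↥(Gamma d)) : Equiv.Perm (List (Fin d))) [-j, 0]
          = gx (gy [-j, 0]) := rfl
      rw [cOf, happ, e1, e2]
      rfl
    show Multiplicative.ofAdd (_ : ZMod d) = Multiplicative.ofAdd (_ : ZMod d) * Multiplicative.ofAdd (_ : ZMod d)
    rw [e3, fin_cast_add, ← ofAdd_add, add_comm]

lemma phi_gG (i : Fin d) (x : ↥(Stab d 1))
    (hx : (x : ↥(Gamma d)) = gG d (i : ℕ)) :
    phi d x = Pi.mulSingle i (Multiplicative.ofAdd (1 : ZMod d)) := by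
  funext j
  show Multiplicative.ofAdd _ = _
  rw [hx]
  have h : cOf d ((gG d (i : ℕ) : ↥(Gamma d)) : Equiv.Perm (List (Fin d))) (-j)
      = if j = i then 1 else 0 := by
    rw [cOf, gG_two d (i : ℕ) (-j) 0, Fin.cast_val_eq_self]
    simp [neg_add_eq_zero]
  rw [h]
  have h1 : (((1 : Fin d)).val : ZMod d) = (1 : ZMod d) := by
    rw [Fin.val_one', ZMod.natCast_mod, Nat.cast_one]
  have h0 : (((0 : Fin d)).val : ZMod d) = (0 : ZMod d) := by simp
  by_cases hji : j = i
  · subst hji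
    rw [if_pos rfl, Pi.mulSingle_eq_same]
    exact congrArg (fun z : ZMod d => Multiplicative.ofAdd z) h1
  · rw [if_neg hji, Pi.mulSingle_eq_of_ne hji]
    exact (congrArg (fun z : ZMod d => Multiplicative.ofAdd z) h0).trans ofAdd_zero

lemma phi_ker : (phi d).ker = (Stab d 2).subgroupOf (Stab d 1) := by
  ext x
  rw [MonoidHom.mem_ker, Subgroup.mem_subgroupOf, mem_stab_iff]
  set g : Equiv.Perm (List (Fin d)) := ((x : ↥(Gamma d)) : Equiv.Perm (List (Fin d)))
  have hg : Good d g := gamma_good d _ (x : ↥(Gamma d)).2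
  have hvalzero : ∀ a : Fin d, ((a.val : ZMod d) = 0) → a = 0 := by
    intro a ha
    have hdvd : d ∣ a.val := (ZMod.natCast_eq_zero_iff _ _).mp ha
    have := Nat.eq_zero_of_dvd_of_lt hdvd a.2
    · exact Fin.ext (by simpa using this)
  constructor
  · intro h w hw
    have hc : ∀ z : Fin d, cOf d g z = 0 := by
      intro z
      have h2 := congrFun h (-z)
      have h3 : Multiplicative.ofAdd (((cOf d g (- -z)).val : ZMod d)) = 1 := h2
      rw [neg_neg] at h3
      exact hvalzero _ (ofAdd_eq_one.mp h3)
    match w with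
    | [a, b] =>
      rw [show g [a, b] = [a, b + cOf d g a] from stab1_struct d hg (stab1_fix d) a b,
        hc a, add_zero]
  · intro h
    funext j
    show Multiplicative.ofAdd _ = _
    have hc : cOf d g (-j) = 0 := by
      rw [cOf, h [-j, 0] rfl]
      rfl
    have h0 : (((0 : Fin d)).val : ZMod d) = (0 : ZMod d) := by simp
    rw [hc, Pi.one_apply]
    exact (congrArg (fun z : ZMod d => Multiplicative.ofAdd z) h0).trans ofAdd_zero

lemma phi_surj : Function.Surjective (phi d) := by
  intro f
  refine ⟨(List.ofFn (fun i : Fin d =>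
    (⟨gG d i.val, gG_mem d i.val⟩ : ↥(Stab d 1)) ^ (Multiplicative.toAdd (f i)).val)).prod, ?_⟩
  rw [map_list_prod, List.map_ofFn]
  have step : ∀ i : Fin d,
      (phi d (⟨gG d i.val, gG_mem d i.val⟩ : ↥(Stab d 1))) ^ (Multiplicative.toAdd (f i)).val
        = Pi.mulSingle i (f i) := by
    intro i
    rw [phi_gG d i _ rfl, ← MonoidHom.mulSingle_apply, ← map_pow]
    have h1 : (Multiplicative.ofAdd (1 : ZMod d)) ^ (Multiplicative.toAdd (f i)).val
        = f i := by
      rw [← ofAdd_nsmul]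
      have : ((Multiplicative.toAdd (f i)).val : ℕ) • (1 : ZMod d)
          = Multiplicative.toAdd (f i) := by
        rw [nsmul_eq_mul, mul_one]
        exact ZMod.natCast_rightInverse _
      rw [this, ofAdd_toAdd]
    rw [h1, MonoidHom.mulSingle_apply]
  have : ((phi d) ∘ fun i : Fin d =>
      (⟨gG d i.val, gG_mem d i.val⟩ : ↥(Stab d 1)) ^ (Multiplicative.toAdd (f i)).val)
      = fun i : Fin d => Pi.mulSingle i (f i) := by
    funext i
    rw [Function.comp_apply, map_pow, step i]
  rw [this, List.prod_ofFn, Finset.univ_prod_mulSingle]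

end FG

/-- For every `d ≥ 5`, `Stab(1)/Stab(2) ≅ (ℤ_d)^d`, via an isomorphism under which the
images of `g_0 = r, g_1 = r^a, …, g_{d-1} = r^{a^{d-1}}` form an independent generating
set (they map to the standard "basis" of `(ℤ_d)^d`). -/
theorem stmt_5 (d : ℕ) [NeZero d] (hd : 5 ≤ d) :
    (∀ i : ℕ, FG.gG d i ∈ FG.Stab d 1) ∧
    ∃ φ : ↥(FG.Stab d 1) →* (Fin d → Multiplicative (ZMod d)),
      Function.Surjective φ ∧
      φ.ker = (FG.Stab d 2).subgroupOf (FG.Stab d 1) ∧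
      ∀ i : Fin d, ∀ x : ↥(FG.Stab d 1), (x : ↥(FG.Gamma d)) = FG.gG d (i : ℕ) →
        φ x = Pi.mulSingle i (Multiplicative.ofAdd (1 : ZMod d)) := by
  exact ⟨fun i => FG.gG_mem d i, FG.phi d, FG.phi_surj d, FG.phi_ker d,
    fun i x hx => FG.phi_gG d i x hx⟩
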